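/- Let G act on a compact metrizable space X preserving the measure class of a Borel probability measure μ, such that μ × μ is ergodic for the diagonal G-action on X × X, X has no isolated points, and nonempty open subsets of X have positive μ-measure. If φ ∈ C(X) satisfies ∑_{g∈G} ∬ |φ(gx) − φ(gy)|² dμ(x)dμ(y) < ∞, then φ is constant. -/

import Mathlib

open MeasureTheory

theorem double_ergodicity_forces_constant
    {X : Type*} [TopologicalSpace X] [CompactSpace X]
    [TopologicalSpace.MetrizableSpace X] [MeasurableSpace X] [BorelSpace X]
    {G : Type*} [Group G] [Countable G] [MulAction G X]
    (hcont : ∀ g : G, Continuous fun x : X => g • x)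
    (hnoiso : ∀ x : X, ¬ IsOpen ({x} : Set X))
    (μ : Measure X) [IsProbabilityMeasure μ]
    (hfull : ∀ U : Set X, IsOpen U → U.Nonempty → 0 < μ U)
    (hergo : ∀ S : Set (X × X), MeasurableSet S →
      (∀ g : G, (fun p : X × X => (g • p.1, g • p.2)) ⁻¹' S = S) →
      (μ.prod μ) S = 0 ∨ (μ.prod μ) S = (μ.prod μ) Set.univ)
    (φ : C(X, ℂ))
    (hsum : Summable fun g : G =>
      ∫ x, ∫ y, ‖φ (g • x) - φ (g • y)‖ ^ 2 ∂μ ∂μ) :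
    ∀ x y : X, φ x = φ y := by
  by_contra hcon
  push_neg at hcon
  obtain ⟨x₀, y₀, hne⟩ := hcon
  have hXne : Nonempty X := ⟨x₀⟩
  letI : MetricSpace X := TopologicalSpace.metrizableSpaceMetric X
  set ν : Measure (X × X) := μ.prod μ with hν
  set σ : G → X × X → X × X := (fun g p => (g • p.1, g • p.2)) with hσ
  have hσcont : ∀ g : G, Continuous (σ g) := fun g =>
    ((hcont g).comp continuous_fst).prodMk ((hcont g).comp continuous_snd)
  have hσcomp : ∀ g h : G, ∀ p, σ g (σ h p) = σ (g * h) p := by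
    intro g h p; simp only [hσ, mul_smul]
  set ψ : X × X → ℝ := (fun p => ‖φ p.1 - φ p.2‖ ^ 2) with hψ
  have hψcont : Continuous ψ :=
    (continuous_norm.comp
      ((φ.continuous.comp continuous_fst).sub (φ.continuous.comp continuous_snd))).pow 2
  have hψnn : ∀ p, 0 ≤ ψ p := fun p => sq_nonneg _
  -- a uniform bound for ψ
  obtain ⟨pm, -, hpm⟩ := isCompact_univ.exists_isMaxOn (Set.univ_nonempty) hψcont.continuousOn
  -- integrability of ψ ∘ σ g
  have hint : ∀ g : G, Integrable (fun p : X × X => ψ (σ g p)) ν := by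
    intro g
    refine ⟨((hψcont.comp (hσcont g))).aestronglyMeasurable, ?_⟩
    refine HasFiniteIntegral.of_bounded (C := ψ pm) (Filter.Eventually.of_forall fun p => ?_)
    rw [Real.norm_eq_abs, abs_of_nonneg (hψnn _)]
    exact hpm (Set.mem_univ _)
  -- rewrite the summands of hsum as integrals over the product
  have hterm : ∀ g : G, (∫ x, ∫ y, ‖φ (g • x) - φ (g • y)‖ ^ 2 ∂μ ∂μ)
      = ∫ p, ψ (σ g p) ∂ν := by
    intro g
    have h1 : Integrable (Function.uncurry fun x y => ψ (σ g (x, y))) (μ.prod μ) := hint g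
    have h2 := MeasureTheory.integral_integral h1
    simp only [hψ, hσ] at h2 ⊢
    exact h2
  have hof : ∀ g : G, ∫⁻ p, ENNReal.ofReal (ψ (σ g p)) ∂ν
      = ENNReal.ofReal (∫ x, ∫ y, ‖φ (g • x) - φ (g • y)‖ ^ 2 ∂μ ∂μ) := by
    intro g
    rw [hterm g]
    exact (ofReal_integral_eq_lintegral_ofReal (hint g)
      (Filter.Eventually.of_forall fun p => hψnn _)).symm
  set F : X × X → ENNReal := (fun p => ∑' g : G, ENNReal.ofReal (ψ (σ g p))) with hF
  have hFmeas : Measurable F :=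
    Measurable.ennreal_tsum fun g => ((hψcont.comp (hσcont g)).measurable).ennreal_ofReal
  have hsumnn : ∀ g : G, 0 ≤ ∫ x, ∫ y, ‖φ (g • x) - φ (g • y)‖ ^ 2 ∂μ ∂μ :=
    fun g => integral_nonneg fun x => integral_nonneg fun y => sq_nonneg _
  have hFint : ∫⁻ p, F p ∂ν ≠ ⊤ := by
    have hmg : ∀ g : G, Measurable (fun p : X × X => ENNReal.ofReal (ψ (σ g p))) :=
      fun g => ((hψcont.comp (hσcont g)).measurable).ennreal_ofReal
    have key : (∫⁻ p, ∑' (g : G), ENNReal.ofReal (ψ (σ g p)) ∂ν) ≠ ⊤ := by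
      rw [lintegral_tsum fun g => (hmg g).aemeasurable]
      rw [tsum_congr hof, ← ENNReal.ofReal_tsum_of_nonneg hsumnn hsum]
      exact ENNReal.ofReal_ne_top
    exact key
  have hFae : ∀ᵐ p ∂ν, F p < ⊤ := ae_lt_top hFmeas hFint
  -- threshold
  set δ : ℝ := ψ (x₀, y₀) / 2 with hδ
  have hψ0 : 0 < ψ (x₀, y₀) := by
    rw [hψ]
    exact pow_pos (norm_pos_iff.mpr (sub_ne_zero.mpr hne)) 2
  have hδpos : 0 < δ := by rw [hδ]; linarith
  have hδlt : δ < ψ (x₀, y₀) := by rw [hδ]; linarith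
  set W : Set (X × X) := {p | δ < ψ p} with hW
  have hWopen : IsOpen W := isOpen_lt continuous_const hψcont
  -- the invariant open sets A O
  set A : Set (X × X) → Set (X × X) := (fun O => ⋃ g : G, σ g ⁻¹' (W ∩ O)) with hA
  have hAinv : ∀ (O : Set (X × X)) (h : G),
      (fun p : X × X => (h • p.1, h • p.2)) ⁻¹' (A O) = A O := by
    intro O h
    ext p
    simp only [hA, Set.mem_iUnion, Set.mem_preimage]
    constructor
    · rintro ⟨g, hg⟩
      refine ⟨g * h, ?_⟩
      rw [← hσcomp g h p]
      exact hg
    · rintro ⟨g, hg⟩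
      refine ⟨g * h⁻¹, ?_⟩
      have : σ (g * h⁻¹) ((fun p : X × X => (h • p.1, h • p.2)) p) = σ g p := by
        have := hσcomp (g * h⁻¹) h p
        rw [show (fun p : X × X => (h • p.1, h • p.2)) p = σ h p from rfl, this,
          inv_mul_cancel_right]
      rw [this]
      exact hg
  have hAopen : ∀ O : Set (X × X), IsOpen O → IsOpen (A O) := fun O hO =>
    isOpen_iUnion fun g => (hWopen.inter hO).preimage (hσcont g)
  have hAdich : ∀ O : Set (X × X), IsOpen O → ν (A O) = 0 ∨ ν (A O) = 1 := by
    intro O hO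
    rcases hergo (A O) (hAopen O hO).measurableSet (hAinv O) with h | h
    · exact Or.inl h
    · right; rw [h, measure_univ]
  -- A univ is conull
  have hS2 : ν (A Set.univ) = 1 := by
    rcases hAdich Set.univ isOpen_univ with h | h
    · exfalso
      obtain ⟨U, V, hU, hV, hxU, hyV, hUV⟩ := isOpen_prod_iff.mp hWopen x₀ y₀ hδlt
      have hsub : U ×ˢ V ⊆ A Set.univ := by
        intro p hp
        rw [hA]
        refine Set.mem_iUnion.mpr ⟨1, ?_⟩
        simp only [Set.mem_preimage, hσ, one_smul, Set.mem_inter_iff, Set.mem_univ, and_true]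
        exact hUV hp
      have hpos : 0 < ν (U ×ˢ V) := by
        rw [hν, Measure.prod_prod]
        exact ENNReal.mul_pos (hfull U hU ⟨x₀, hxU⟩).ne' (hfull V hV ⟨y₀, hyV⟩).ne'
      have := measure_mono_null hsub h
      rw [this] at hpos
      exact lt_irrefl 0 hpos
    · exact h
  -- countable basis of X × X
  obtain ⟨B, hBcount, -, hBbasis⟩ := TopologicalSpace.exists_countable_basis (X × X)
  -- almost every point is "generic"
  have hae2 : ∀ᵐ p ∂ν, p ∈ A Set.univ := by
    have hc : ν (A Set.univ)ᶜ = 0 := by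
      rw [measure_compl (hAopen _ isOpen_univ).measurableSet (measure_ne_top _ _), hS2,
        measure_univ, tsub_self]
    exact (MeasureTheory.measure_eq_zero_iff_ae_notMem.mp hc).mono fun p hp => not_not.mp hp
  have hae3 : ∀ᵐ p ∂ν, ∀ O ∈ B, (p ∈ A O → ν (A O) = 1) := by
    rw [MeasureTheory.ae_ball_iff hBcount]
    intro O hO
    rcases hAdich O (hBbasis.isOpen hO) with h | h
    · filter_upwards [MeasureTheory.measure_eq_zero_iff_ae_notMem.mp h] with p hp hp2
      exact absurd hp2 hp
    · exact Filter.Eventually.of_forall fun p _ => h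
  have hae4 : ∀ᵐ p ∂ν, ∀ O ∈ B, (ν (A O) = 1 → p ∈ A O) := by
    rw [MeasureTheory.ae_ball_iff hBcount]
    intro O hO
    by_cases h : ν (A O) = 1
    · have hc : ν (A O)ᶜ = 0 := by
        rw [measure_compl (hAopen _ (hBbasis.isOpen hO)).measurableSet (measure_ne_top _ _), h,
          measure_univ, tsub_self]
      filter_upwards [MeasureTheory.measure_eq_zero_iff_ae_notMem.mp hc] with p hp _
      exact not_not.mp hp
    · exact Filter.Eventually.of_forall fun p h' => absurd h' h
  have hΓ : ∀ᵐ p ∂ν, (F p < ⊤ ∧ p ∈ A Set.univ ∧ (∀ O ∈ B, (p ∈ A O → ν (A O) = 1)) ∧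
      (∀ O ∈ B, (ν (A O) = 1 → p ∈ A O))) := by
    filter_upwards [hFae, hae2, hae3, hae4] with p h1 h2 h3 h4
    exact ⟨h1, h2, h3, h4⟩
  have hνne : ν ≠ 0 := IsProbabilityMeasure.ne_zero ν
  obtain ⟨pb, hpb1, hpb2, hpb3, hpb4⟩ := hΓ.exists
  -- the finite "top set" of the generic point pb
  have hKfin : Set.Finite {g : G | δ < ψ (σ g pb)} := by
    have h1 := ENNReal.finite_const_le_of_tsum_ne_top
      (a := fun g : G => ENNReal.ofReal (ψ (σ g pb))) hpb1.ne
      (ε := ENNReal.ofReal δ) (by simpa using (ENNReal.ofReal_pos.mpr hδpos).ne')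
    refine h1.subset fun g hg => ?_
    exact ENNReal.ofReal_le_ofReal (le_of_lt hg)
  set Q : Set (X × X) := ((fun g : G => σ g pb) '' {g | δ < ψ (σ g pb)}) with hQ
  have hQfin : Q.Finite := hKfin.image _
  set C : Set (X × X) := (⋃ g : G, σ g '' Q) with hC
  have hCcount : C.Countable := Set.countable_iUnion fun g => (hQfin.image _).countable
  -- almost every point lies in the countable set C
  have hCae : ∀ᵐ p ∂ν, p ∈ C := by
    filter_upwards [hΓ] with p hp
    obtain ⟨hp1, hp2, hp3, hp4⟩ := hp
    obtain ⟨g₀, hg₀⟩ := Set.mem_iUnion.mp hp2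
    rw [Set.mem_preimage] at hg₀
    have hg₀W : σ g₀ p ∈ W := hg₀.1
    have hq : σ g₀ p ∈ Q := by
      by_contra hqn
      have hQclosed : IsClosed Q := hQfin.isClosed
      obtain ⟨O, hOB, hqO, hOsub⟩ :=
        hBbasis.exists_subset_of_mem_open (show σ g₀ p ∈ Qᶜ from hqn) hQclosed.isOpen_compl
      have hpA : p ∈ A O := Set.mem_iUnion.mpr ⟨g₀, Set.mem_preimage.mpr ⟨hg₀W, hqO⟩⟩
      have h1 : ν (A O) = 1 := hp3 O hOB hpA
      obtain ⟨g₁, hg₁⟩ := Set.mem_iUnion.mp (hpb4 O hOB h1)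
      rw [Set.mem_preimage] at hg₁
      have : σ g₁ pb ∈ Q := ⟨g₁, hg₁.1, rfl⟩
      exact hOsub hg₁.2 this
    refine Set.mem_iUnion.mpr ⟨g₀⁻¹, ⟨σ g₀ p, hq, ?_⟩⟩
    rw [hσcomp, inv_mul_cancel]
    simp only [hσ, one_smul]
  -- extract an atom of ν from the countable conull set C
  have hCc : ν Cᶜ = 0 := by
    rw [MeasureTheory.measure_eq_zero_iff_ae_notMem]
    filter_upwards [hCae] with p hp
    exact not_not.mpr hp
  have hatom : ∃ q ∈ C, ν {q} ≠ 0 := by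
    by_contra hno
    push_neg at hno
    have hC0 : ν C = 0 := by
      have hCe : C = ⋃ q ∈ C, {q} := by simp
      rw [hCe]
      exact (measure_biUnion_null_iff hCcount).mpr fun q hq => hno q hq
    have : (1 : ENNReal) = 0 := by
      have h1 : ν Set.univ = 1 := measure_univ
      have h2 : ν Set.univ ≤ ν C + ν Cᶜ := by
        rw [← Set.union_compl_self C]
        exact measure_union_le _ _
      rw [hC0, hCc, add_zero, h1] at h2
      exact le_antisymm h2 (zero_le)
    exact one_ne_zero this
  obtain ⟨⟨a, b⟩, -, hab⟩ := hatom
  have hμa : μ {a} ≠ 0 := by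
    intro h0
    apply hab
    have : ({(a, b)} : Set (X × X)) = {a} ×ˢ {b} := (Set.singleton_prod_singleton).symm
    rw [this, hν, Measure.prod_prod, h0, zero_mul]
  -- the invariant countable set T
  set T : Set (X × X) := (⋃ g : G, ({((g : G) • a, g • a)} : Set (X × X))) with hT
  have hTmeas : MeasurableSet T :=
    MeasurableSet.iUnion fun g => measurableSet_singleton _
  have hTinv : ∀ h : G, (fun p : X × X => (h • p.1, h • p.2)) ⁻¹' T = T := by
    intro h
    ext p
    simp only [hT, Set.mem_iUnion, Set.mem_preimage, Set.mem_singleton_iff, Prod.ext_iff]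
    constructor
    · rintro ⟨g, h1, h2⟩
      refine ⟨h⁻¹ * g, ?_, ?_⟩
      · rw [mul_smul, ← h1, inv_smul_smul]
      · rw [mul_smul, ← h2, inv_smul_smul]
    · rintro ⟨g, h1, h2⟩
      exact ⟨h * g, by rw [mul_smul, h1], by rw [mul_smul, h2]⟩
  have hTpos : ν T ≠ 0 := by
    intro h0
    apply hμa
    have hmem : ((a, a) : X × X) ∈ T := by
      refine Set.mem_iUnion.mpr ⟨1, ?_⟩
      simp [one_smul]
    have h1 : ν {((a, a) : X × X)} ≤ ν T := measure_mono (Set.singleton_subset_iff.mpr hmem)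
    rw [h0, le_zero_iff] at h1
    have : ({((a, a) : X × X)} : Set (X × X)) = {a} ×ˢ {a} := (Set.singleton_prod_singleton).symm
    rw [this, hν, Measure.prod_prod] at h1
    exact (mul_self_eq_zero).mp h1
  have hT1 : ν T = 1 := by
    rcases hergo T hTmeas hTinv with h | h
    · exact absurd h hTpos
    · rw [h, measure_univ]
  -- conclude μ is Dirac at a
  have hD : ν ({a} ×ˢ ({a}ᶜ : Set X)) = 0 := by
    have hsub : ({a} ×ˢ ({a}ᶜ : Set X)) ⊆ Tᶜ := by
      rintro ⟨x, y⟩ ⟨hx, hy⟩ hmem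
      obtain ⟨g, hg⟩ := Set.mem_iUnion.mp hmem
      rw [Set.mem_singleton_iff, Prod.ext_iff] at hg
      rw [Set.mem_singleton_iff] at hx
      apply hy
      rw [Set.mem_singleton_iff, hg.2]
      show g • a = a
      exact hg.1.symm.trans hx
    have hTc : ν Tᶜ = 0 := by
      rw [measure_compl hTmeas (measure_ne_top _ _), hT1, measure_univ, tsub_self]
    exact measure_mono_null hsub hTc
  have hμac : μ ({a}ᶜ : Set X) = 0 := by
    rw [hν, Measure.prod_prod] at hD
    rcases mul_eq_zero.mp hD with h | h
    · exact absurd h hμa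
    · exact h
  have hall : ∀ z : X, z = a := by
    intro z
    by_contra hz
    have := hfull ({a}ᶜ) isOpen_compl_singleton ⟨z, hz⟩
    rw [hμac] at this
    exact lt_irrefl 0 this
  have huniv : ({a} : Set X) = Set.univ := Set.eq_univ_of_forall fun z => by
    rw [Set.mem_singleton_iff]; exact hall z
  exact hnoiso a (huniv ▸ isOpen_univ)
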